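/- Let α > 1, σ > 0, C > 0, let p, T be positive integers, and let ḡ₁, …, ḡ_T : 𝒟 → ℝ^p be functions each satisfying ‖ḡ_t(D)‖₂ ≤ C for every D ∈ 𝒟 and every t. Then the composed mechanism releasing the T independently perturbed gradients, M(D) = N(ḡ₁(D), σ²C²·I_p) × ⋯ × N(ḡ_T(D), σ²C²·I_p) on (ℝ^p)^T, satisfies (α, 2αT/σ²)-Rényi differential privacy: for all D, D' ∈ 𝒟, D_α(M(D) ‖ M(D')) ≤ 2αT/σ². -/

import Mathlib

open MeasureTheory ProbabilityTheory ENNReal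

open Classical in
/-- The Rényi divergence of order `α` between two measures: `(α-1)⁻¹ log ∫ (dP/dQ)^α dQ`
when `P ≪ Q`, and `⊤` otherwise. -/
noncomputable def renyiDiv {X : Type*} [MeasurableSpace X] (α : ℝ) (P Q : Measure X) : EReal :=
  if P ≪ Q then ((α - 1)⁻¹ : ℝ) * ENNReal.log (∫⁻ x, (P.rnDeriv Q x) ^ α ∂Q) else ⊤
/-- The Gaussian measure `N(μ, v·I_p)` on `ℝ^p` with mean `μ` and covariance `v` times the
identity, realized as a product of one-dimensional Gaussians. -/
noncomputable def gaussianPi {p : ℕ} (μ : Fin p → ℝ) (v : NNReal) : Measure (Fin p → ℝ) :=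
  Measure.pi fun i => gaussianReal (μ i) v


open MeasureTheory ProbabilityTheory ENNReal
open scoped NNReal Real

universe u

lemma lintegral_pi_prod_fin (n : ℕ) : ∀ {X : Fin n → Type u} [∀ i, MeasurableSpace (X i)]
    (μ : ∀ i, Measure (X i)) [∀ i, SigmaFinite (μ i)] (f : ∀ i, X i → ℝ≥0∞),
    (∀ i, Measurable (f i)) →
    ∫⁻ x, ∏ i, f i (x i) ∂Measure.pi μ = ∏ i, ∫⁻ x, f i x ∂μ i := by
  induction n with
  | zero => intro X _ μ _ f hf; simp
  | succ n ih =>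
      intro X _ μ _ f hf
      have hmeas : Measurable fun (y : ∀ j, X ((0 : Fin (n+1)).succAbove j)) =>
          ∏ j, f ((0 : Fin (n+1)).succAbove j) (y j) :=
        Finset.measurable_prod _ fun j _ =>
          (hf _).comp (measurable_pi_apply j)
      calc ∫⁻ x, ∏ i, f i (x i) ∂Measure.pi μ
          = ∫⁻ y, f 0 y.1 * ∏ j, f ((0 : Fin (n+1)).succAbove j) (y.2 j)
              ∂((μ 0).prod (Measure.pi fun j => μ ((0 : Fin (n+1)).succAbove j))) := by
            rw [← (measurePreserving_piFinSuccAbove μ 0).lintegral_comp_emb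
              (MeasurableEquiv.piFinSuccAbove X 0).measurableEmbedding]
            refine lintegral_congr fun x => ?_
            rw [Fin.prod_univ_succAbove (fun i => f i (x i)) 0]
            rfl
        _ = (∫⁻ y, f 0 y ∂μ 0) *
              ∏ j, ∫⁻ y, f ((0 : Fin (n+1)).succAbove j) y ∂μ ((0 : Fin (n+1)).succAbove j) := by
            rw [lintegral_prod_mul (hf 0).aemeasurable hmeas.aemeasurable,
              ih _ _ (fun j => hf _)]
        _ = ∏ i, ∫⁻ x, f i x ∂μ i :=
            (Fin.prod_univ_succAbove (fun i => ∫⁻ x, f i x ∂μ i) 0).symm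

lemma indicator_pi_prod {n : ℕ} {X : Fin n → Type u} (s : ∀ i, Set (X i))
    (f : ∀ i, X i → ℝ≥0∞) (x : ∀ i, X i) :
    (Set.pi Set.univ s).indicator (fun x => ∏ i, f i (x i)) x
      = ∏ i, (s i).indicator (f i) (x i) := by
  by_cases hx : x ∈ Set.pi Set.univ s
  · rw [Set.indicator_of_mem hx]
    exact Finset.prod_congr rfl fun i _ =>
      (Set.indicator_of_mem (hx i trivial) _).symm
  · rw [Set.indicator_of_notMem hx]
    obtain ⟨i, hi⟩ : ∃ i, x i ∉ s i := by simpa [Set.mem_pi] using hx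
    exact (Finset.prod_eq_zero (Finset.mem_univ i) (Set.indicator_of_notMem hi _)).symm

lemma pi_withDensity_prod {n : ℕ} {X : Fin n → Type u} [∀ i, MeasurableSpace (X i)]
    (μ : ∀ i, Measure (X i)) [∀ i, SigmaFinite (μ i)] (f : ∀ i, X i → ℝ≥0∞)
    (hf : ∀ i, Measurable (f i)) (ν : ∀ i, Measure (X i)) [∀ i, SigmaFinite (ν i)]
    (h : ∀ i, (μ i).withDensity (f i) = ν i) :
    (Measure.pi μ).withDensity (fun x => ∏ i, f i (x i)) = Measure.pi ν := by
  refine (Measure.pi_eq (μ := ν) fun s hs => ?_).symm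
  rw [withDensity_apply _ (MeasurableSet.univ_pi hs), ← lintegral_indicator (MeasurableSet.univ_pi hs)]
  calc ∫⁻ x, (Set.pi Set.univ s).indicator (fun x => ∏ i, f i (x i)) x ∂Measure.pi μ
      = ∫⁻ x, ∏ i, (s i).indicator (f i) (x i) ∂Measure.pi μ :=
        lintegral_congr fun x => indicator_pi_prod s f x
    _ = ∏ i, ∫⁻ y, (s i).indicator (f i) y ∂μ i :=
        lintegral_pi_prod_fin n μ _ (fun i => (hf i).indicator (hs i))
    _ = ∏ i, ν i (s i) := Finset.prod_congr rfl fun i _ => by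
        rw [lintegral_indicator (hs i), ← withDensity_apply _ (hs i), h i]

lemma gaussianPDFReal_ratio_rpow (α : ℝ) (μ ν x : ℝ) {v : ℝ≥0} (hv : v ≠ 0) :
    (gaussianPDFReal μ v x / gaussianPDFReal ν v x) ^ α * gaussianPDFReal ν v x
      = Real.exp (α * (α - 1) * (μ - ν) ^ 2 / (2 * v))
        * gaussianPDFReal (α * μ + (1 - α) * ν) v x := by
  have hv' : (0 : ℝ) < v := by positivity
  have hc : (0 : ℝ) < (Real.sqrt (2 * Real.pi * v))⁻¹ := by positivity
  simp only [gaussianPDFReal]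
  rw [mul_div_mul_left _ _ hc.ne', ← Real.exp_sub,
    Real.rpow_def_of_pos (Real.exp_pos _), Real.log_exp]
  have key : (-(x - μ) ^ 2 / (2 * v) - -(x - ν) ^ 2 / (2 * v)) * α + -(x - ν) ^ 2 / (2 * v)
      = α * (α - 1) * (μ - ν) ^ 2 / (2 * (v : ℝ))
        + -(x - (α * μ + (1 - α) * ν)) ^ 2 / (2 * v) := by
    field_simp
    ring
  calc Real.exp ((-(x - μ) ^ 2 / (2 * v) - -(x - ν) ^ 2 / (2 * v)) * α)
        * ((Real.sqrt (2 * Real.pi * v))⁻¹ * Real.exp (-(x - ν) ^ 2 / (2 * v)))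
      = (Real.sqrt (2 * Real.pi * v))⁻¹
          * Real.exp ((-(x - μ) ^ 2 / (2 * v) - -(x - ν) ^ 2 / (2 * v)) * α
            + -(x - ν) ^ 2 / (2 * v)) := by rw [Real.exp_add]; ring
    _ = (Real.sqrt (2 * Real.pi * v))⁻¹
          * Real.exp (α * (α - 1) * (μ - ν) ^ 2 / (2 * (v : ℝ))
            + -(x - (α * μ + (1 - α) * ν)) ^ 2 / (2 * v)) := by rw [key]
    _ = _ := by rw [Real.exp_add]; ring

lemma gaussian_withDensity_ratio (μ ν : ℝ) {v : ℝ≥0} (hv : v ≠ 0) :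
    (gaussianReal ν v).withDensity (fun x => gaussianPDF μ v x / gaussianPDF ν v x)
      = gaussianReal μ v := by
  rw [gaussianReal_of_var_ne_zero _ hv, gaussianReal_of_var_ne_zero _ hv,
    ← withDensity_mul _ (g := fun x => gaussianPDF μ v x / gaussianPDF ν v x) (measurable_gaussianPDF _ _)
      ((measurable_gaussianPDF _ _).div (measurable_gaussianPDF _ _))]
  congr 1
  ext x
  exact ENNReal.mul_div_cancel (gaussianPDF_pos _ hv _).ne' ENNReal.ofReal_ne_top

lemma gaussian_lintegral_ratio_rpow {α : ℝ} (hα : 0 < α) (μ ν : ℝ) {v : ℝ≥0} (hv : v ≠ 0) :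
    ∫⁻ x, (gaussianPDF μ v x / gaussianPDF ν v x) ^ α ∂(gaussianReal ν v)
      = ENNReal.ofReal (Real.exp (α * (α - 1) * (μ - ν) ^ 2 / (2 * v))) := by
  have hρ : Measurable fun x => (gaussianPDF μ v x / gaussianPDF ν v x) ^ α :=
    ((measurable_gaussianPDF _ _).div (measurable_gaussianPDF _ _)).pow_const α
  rw [gaussianReal_of_var_ne_zero _ hv,
    lintegral_withDensity_eq_lintegral_mul _ (measurable_gaussianPDF _ _) hρ]
  have hpt : ∀ x, (gaussianPDF ν v * fun x => (gaussianPDF μ v x / gaussianPDF ν v x) ^ α) x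
      = ENNReal.ofReal (Real.exp (α * (α - 1) * (μ - ν) ^ 2 / (2 * v)))
        * gaussianPDF (α * μ + (1 - α) * ν) v x := by
    intro x
    have hgpos := gaussianPDFReal_pos ν v x hv
    have hfpos := gaussianPDFReal_pos μ v x hv
    simp only [Pi.mul_apply, gaussianPDF]
    rw [← ENNReal.ofReal_div_of_pos hgpos, ENNReal.ofReal_rpow_of_pos (by positivity),
      ← ENNReal.ofReal_mul (by positivity), ← ENNReal.ofReal_mul (Real.exp_nonneg _)]
    rw [mul_comm (gaussianPDFReal ν v x) _, gaussianPDFReal_ratio_rpow α μ ν x hv]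
  simp_rw [hpt]
  rw [lintegral_const_mul _ (measurable_gaussianPDF _ _), lintegral_gaussianPDF_eq_one _ hv,
    mul_one]

instance gaussianPi_isProbabilityMeasure {p : ℕ} (μ : Fin p → ℝ) (v : ℝ≥0) :
    IsProbabilityMeasure (gaussianPi μ v) := by
  unfold gaussianPi; infer_instance

theorem gaussian_mechanism_composition_rdp (α σ C : ℝ) (hα : 1 < α) (hσ : 0 < σ) (hC : 0 < C)
    {p T : ℕ} (hp : 0 < p) (hT : 0 < T) {𝒟 : Type*} (g : Fin T → 𝒟 → Fin p → ℝ)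
    (hg : ∀ t D, Real.sqrt (∑ i, g t D i ^ 2) ≤ C) :
    ∀ D D' : 𝒟,
      renyiDiv α
          (Measure.pi fun t => gaussianPi (g t D) ⟨(σ * C) ^ 2, sq_nonneg (σ * C)⟩)
          (Measure.pi fun t => gaussianPi (g t D') ⟨(σ * C) ^ 2, sq_nonneg (σ * C)⟩)
        ≤ ((2 * α * T / σ ^ 2 : ℝ) : EReal) := by
  intro D D'
  have hα1 : (0:ℝ) < α - 1 := by linarith
  have hα0 : (0:ℝ) < α := by linarith
  set v : ℝ≥0 := ⟨(σ * C) ^ 2, sq_nonneg (σ * C)⟩ with hv_def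
  have hvR : (v : ℝ) = (σ * C) ^ 2 := rfl
  have hv : v ≠ 0 := by
    intro h
    have h2 : ((σ * C) ^ 2 : ℝ) = 0 := by rw [← hvR, h, NNReal.coe_zero]
    nlinarith [mul_pos hσ hC]
  set P := Measure.pi fun t => gaussianPi (g t D) v with hP
  set Q := Measure.pi fun t => gaussianPi (g t D') v with hQ
  set r : Fin T → Fin p → ℝ → ℝ≥0∞ :=
    fun t i x => gaussianPDF (g t D i) v x / gaussianPDF (g t D' i) v x with hr
  have hr_meas : ∀ t i, Measurable (r t i) := fun t i =>
    (measurable_gaussianPDF _ _).div (measurable_gaussianPDF _ _)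
  have h1 : ∀ t i, (gaussianReal (g t D' i) v).withDensity (r t i)
      = gaussianReal (g t D i) v := fun t i => gaussian_withDensity_ratio _ _ hv
  have hinner_meas : ∀ t, Measurable fun y : Fin p → ℝ => ∏ i, r t i (y i) :=
    fun t => Finset.measurable_prod _ fun i _ => (hr_meas t i).comp (measurable_pi_apply i)
  have h2 : ∀ t, (gaussianPi (g t D') v).withDensity (fun y => ∏ i, r t i (y i))
      = gaussianPi (g t D) v := by
    intro t
    unfold gaussianPi
    exact pi_withDensity_prod _ _ (fun i => hr_meas t i) _ (h1 t)
  set ρ : (Fin T → Fin p → ℝ) → ℝ≥0∞ := fun x => ∏ t, ∏ i, r t i (x t i) with hρdef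
  have hρ_meas : Measurable ρ := Finset.measurable_prod _ fun t _ =>
    (hinner_meas t).comp (measurable_pi_apply t)
  have h3 : Q.withDensity ρ = P := by
    rw [hP, hQ, hρdef]
    exact pi_withDensity_prod (fun t => gaussianPi (g t D') v)
      (fun t y => ∏ i, r t i (y i)) hinner_meas (fun t => gaussianPi (g t D) v) h2
  have hac : P ≪ Q := h3 ▸ withDensity_absolutelyContinuous _ _
  have hrn : P.rnDeriv Q =ᵐ[Q] ρ := h3 ▸ Measure.rnDeriv_withDensity Q hρ_meas
  have gdef : ∀ (m : Fin p → ℝ), gaussianPi m v = Measure.pi fun i => gaussianReal (m i) v :=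
    fun m => rfl
  have hpow : ∀ x : Fin T → Fin p → ℝ, ρ x ^ α = ∏ t, ∏ i, (r t i (x t i)) ^ α := by
    intro x
    calc ρ x ^ α = (∏ t, ∏ i, r t i (x t i)) ^ α := rfl
      _ = ∏ t, (∏ i, r t i (x t i)) ^ α := (ENNReal.prod_rpow_of_nonneg hα0.le).symm
      _ = ∏ t, ∏ i, (r t i (x t i)) ^ α :=
          Finset.prod_congr rfl fun t _ => (ENNReal.prod_rpow_of_nonneg hα0.le).symm
  have hint1 : ∀ t, (∫⁻ y, ∏ i, (r t i (y i)) ^ α ∂gaussianPi (g t D') v)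
      = ∏ i, ∫⁻ x, (r t i x) ^ α ∂gaussianReal (g t D' i) v := by
    intro t
    rw [gdef]
    exact lintegral_pi_prod_fin p (fun i => gaussianReal (g t D' i) v)
      (fun i y => (r t i y) ^ α) (fun i => (hr_meas t i).pow_const α)
  have hint2 : (∫⁻ x, ∏ t, ∏ i, (r t i (x t i)) ^ α ∂Q)
      = ∏ t, ∫⁻ y, ∏ i, (r t i (y i)) ^ α ∂gaussianPi (g t D') v := by
    rw [hQ]
    exact lintegral_pi_prod_fin T (fun t => gaussianPi (g t D') v)
      (fun t y => ∏ i, (r t i (y i)) ^ α)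
      (fun t => Finset.measurable_prod _ fun i _ =>
        ((hr_meas t i).pow_const α).comp (measurable_pi_apply i))
  have hint : ∫⁻ x, (P.rnDeriv Q x) ^ α ∂Q
      = ENNReal.ofReal (Real.exp
          (∑ t, ∑ i, α * (α - 1) * (g t D i - g t D' i) ^ 2 / (2 * (v:ℝ)))) := by
    calc ∫⁻ x, (P.rnDeriv Q x) ^ α ∂Q = ∫⁻ x, ρ x ^ α ∂Q :=
          lintegral_congr_ae (hrn.mono fun x hx => by simp only [hx])
      _ = ∫⁻ x, ∏ t, ∏ i, (r t i (x t i)) ^ α ∂Q := lintegral_congr hpow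
      _ = ∏ t, ∫⁻ y, ∏ i, (r t i (y i)) ^ α ∂gaussianPi (g t D') v := hint2
      _ = ∏ t, ∏ i, ∫⁻ x, (r t i x) ^ α ∂gaussianReal (g t D' i) v :=
          Finset.prod_congr rfl fun t _ => hint1 t
      _ = ∏ t, ∏ i, ENNReal.ofReal
            (Real.exp (α * (α - 1) * (g t D i - g t D' i) ^ 2 / (2 * (v:ℝ)))) :=
          Finset.prod_congr rfl fun t _ => Finset.prod_congr rfl fun i _ =>
            gaussian_lintegral_ratio_rpow hα0 _ _ hv
      _ = ENNReal.ofReal (Real.exp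
            (∑ t, ∑ i, α * (α - 1) * (g t D i - g t D' i) ^ 2 / (2 * (v:ℝ)))) := by
          rw [Real.exp_sum, ENNReal.ofReal_prod_of_nonneg
            (fun t _ => Real.exp_nonneg _)]
          refine Finset.prod_congr rfl fun t _ => ?_
          rw [Real.exp_sum, ENNReal.ofReal_prod_of_nonneg (fun i _ => Real.exp_nonneg _)]
  -- the key real inequality
  have hS : ∀ t, ∑ i, (g t D i - g t D' i) ^ 2 ≤ 4 * C ^ 2 := by
    intro t
    set u : EuclideanSpace ℝ (Fin p) := (WithLp.equiv 2 (Fin p → ℝ)).symm (g t D) with hu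
    set w : EuclideanSpace ℝ (Fin p) := (WithLp.equiv 2 (Fin p → ℝ)).symm (g t D') with hw
    have hnu : ‖u‖ ≤ C := by
      rw [EuclideanSpace.norm_eq]
      convert hg t D using 3 with i
      rw [Real.norm_eq_abs, sq_abs]; rfl
    have hnw : ‖w‖ ≤ C := by
      rw [EuclideanSpace.norm_eq]
      convert hg t D' using 3 with i
      rw [Real.norm_eq_abs, sq_abs]; rfl
    have hsub : ‖u - w‖ ≤ 2 * C := le_trans (norm_sub_le u w) (by linarith)
    have hsq : ‖u - w‖ ^ 2 = ∑ i, (g t D i - g t D' i) ^ 2 := by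
      rw [EuclideanSpace.norm_eq, Real.sq_sqrt (Finset.sum_nonneg fun i _ => sq_nonneg _)]
      refine Finset.sum_congr rfl fun i _ => ?_
      rw [Real.norm_eq_abs, sq_abs]; rfl
    nlinarith [norm_nonneg (u - w)]
  have hX : ∑ t, ∑ i, (g t D i - g t D' i) ^ 2 ≤ (T : ℝ) * (4 * C ^ 2) := by
    calc ∑ t, ∑ i, (g t D i - g t D' i) ^ 2 ≤ ∑ _t : Fin T, 4 * C ^ 2 :=
          Finset.sum_le_sum fun t _ => hS t
      _ = (T : ℝ) * (4 * C ^ 2) := by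
          simp [Finset.sum_const, Finset.card_univ, nsmul_eq_mul]
  have hrearrange : ∑ t, ∑ i, α * (α - 1) * (g t D i - g t D' i) ^ 2 / (2 * (v:ℝ))
      = (α * (α - 1) / (2 * (v:ℝ))) * ∑ t, ∑ i, (g t D i - g t D' i) ^ 2 := by
    rw [Finset.mul_sum]
    refine Finset.sum_congr rfl fun t _ => ?_
    rw [Finset.mul_sum]
    exact Finset.sum_congr rfl fun i _ => by ring
  have hreal : (α - 1)⁻¹ * ∑ t, ∑ i, α * (α - 1) * (g t D i - g t D' i) ^ 2 / (2 * (v:ℝ))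
      ≤ 2 * α * T / σ ^ 2 := by
    have hk : 0 ≤ α * (α - 1) / (2 * (v:ℝ)) := by
      apply div_nonneg (by nlinarith) (by rw [hvR]; positivity)
    calc (α - 1)⁻¹ * ∑ t, ∑ i, α * (α - 1) * (g t D i - g t D' i) ^ 2 / (2 * (v:ℝ))
        = (α - 1)⁻¹ * ((α * (α - 1) / (2 * (v:ℝ))) * ∑ t, ∑ i, (g t D i - g t D' i) ^ 2) := by
          rw [hrearrange]
      _ ≤ (α - 1)⁻¹ * ((α * (α - 1) / (2 * (v:ℝ))) * ((T : ℝ) * (4 * C ^ 2))) := by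
          apply mul_le_mul_of_nonneg_left (mul_le_mul_of_nonneg_left hX hk)
            (inv_pos.mpr hα1).le
      _ = 2 * α * T / σ ^ 2 := by
          rw [hvR]
          field_simp
          ring
  rw [renyiDiv, if_pos hac, hint, ENNReal.log_ofReal_of_pos (Real.exp_pos _), Real.log_exp,
    ← EReal.coe_mul]
  exact EReal.coe_le_coe_iff.mpr hreal
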